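/- arXiv:1403.5826 — 3 statements merged into one kernel-verified Lean document; each statement's English description precedes it below -/
import Mathlib

section
/- Let K ⊆ F ⊆ L be a tower of number fields, let p be a prime number, let t be a positive integer, and let 𝔭 be a nonzero prime ideal of the ring of integers O_K of K. Assume: (i) for every nonzero prime ideal 𝔓 of O_L lying over 𝔭, p^t divides e(𝔓/𝔭)·f(𝔓/𝔭); and (ii) for every nonzero prime ideal 𝔮 of O_F lying over 𝔭, p does not divide e(𝔮/𝔭)·f(𝔮/𝔭). Then p^t divides the field degree [L:F]. -/
open NumberField Ideal

/-- Let `K ⊆ F ⊆ L` be a tower of number fields, `p` a prime, `t > 0`,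
and `𝔭` a nonzero prime ideal of `𝓞 K`.  If `p ^ t` divides `e · f` for every nonzero prime
of `𝓞 L` over `𝔭`, while `p` does not divide `e · f` for any nonzero prime of `𝓞 F` over `𝔭`,
then `p ^ t` divides `[L : F]`. -/
theorem selectivity_stmt0
    (K F L : Type) [Field K] [Field F] [Field L]
    [NumberField K] [NumberField F] [NumberField L]
    [Algebra K F] [Algebra F L] [Algebra K L] [IsScalarTower K F L]
    (p t : ℕ) (hp : p.Prime) (ht : 0 < t)
    (𝔭 : Ideal (𝓞 K)) (h𝔭ne : 𝔭 ≠ ⊥) (h𝔭 : 𝔭.IsPrime)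
    (hL : ∀ P : Ideal (𝓞 L), P ≠ ⊥ → P.IsPrime →
        Ideal.comap (algebraMap (𝓞 K) (𝓞 L)) P = 𝔭 →
        p ^ t ∣ Ideal.ramificationIdx' 𝔭 P *
          Ideal.inertiaDeg' 𝔭 P)
    (hF : ∀ 𝔮 : Ideal (𝓞 F), 𝔮 ≠ ⊥ → 𝔮.IsPrime →
        Ideal.comap (algebraMap (𝓞 K) (𝓞 F)) 𝔮 = 𝔭 →
        ¬ p ∣ Ideal.ramificationIdx' 𝔭 𝔮 *
          Ideal.inertiaDeg' 𝔭 𝔮) :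
    p ^ t ∣ Module.finrank F L := by
  classical
  -- choose a prime 𝔮 of 𝓞 F over 𝔭
  haveI := h𝔭
  obtain ⟨𝔮, -, h𝔮p, h𝔮c⟩ := Ideal.exists_ideal_over_prime_of_isIntegral (S := 𝓞 F) 𝔭 ⊥
    (by rw [← RingHom.ker_eq_comap_bot, RingOfIntegers.ker_algebraMap_eq_bot]; exact bot_le)
  haveI := h𝔮p
  have h𝔮ne : 𝔮 ≠ ⊥ := by
    rintro rfl
    rw [← RingHom.ker_eq_comap_bot, RingOfIntegers.ker_algebraMap_eq_bot] at h𝔮c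
    exact h𝔭ne h𝔮c.symm
  haveI h𝔮max : 𝔮.IsMaximal := Ring.DimensionLEOne.maximalOfPrime h𝔮ne h𝔮p
  haveI h𝔭max : 𝔭.IsMaximal := Ring.DimensionLEOne.maximalOfPrime h𝔭ne h𝔭
  -- the fundamental identity over 𝔮
  have hsum := Ideal.sum_ramification_inertia (R := 𝓞 F) (S := 𝓞 L) (p := 𝔮) F L h𝔮ne
  rw [← hsum]
  have hmapQ : Ideal.map (algebraMap (𝓞 F) (𝓞 L)) 𝔮 ≠ ⊥ := by
    rwa [Ne, Ideal.map_eq_bot_iff_of_injective (RingOfIntegers.algebraMap.injective F L)]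
  have hmapP : Ideal.map (algebraMap (𝓞 K) (𝓞 L)) 𝔭 ≠ ⊥ := by
    rwa [Ne, Ideal.map_eq_bot_iff_of_injective (RingOfIntegers.algebraMap.injective K L)]
  refine Finset.dvd_sum ?_
  intro P hP
  have hPprime : P.IsPrime := Ideal.isPrime_of_prime
    (UniqueFactorizationMonoid.prime_of_factor P (Multiset.mem_toFinset.mp hP))
  haveI := hPprime
  have hPne : P ≠ ⊥ := (UniqueFactorizationMonoid.prime_of_factor P
    (Multiset.mem_toFinset.mp hP)).ne_zero
  have hle : Ideal.map (algebraMap (𝓞 F) (𝓞 L)) 𝔮 ≤ P :=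
    Ideal.le_of_dvd (UniqueFactorizationMonoid.dvd_of_mem_factors
      (Multiset.mem_toFinset.mp hP))
  -- P lies over 𝔮
  have hPc : Ideal.comap (algebraMap (𝓞 F) (𝓞 L)) P = 𝔮 := by
    refine (h𝔮max.eq_of_le (fun h => hPprime.ne_top ?_) ?_).symm
    · rw [Ideal.eq_top_iff_one] at h ⊢
      simpa using h
    · exact Ideal.le_comap_of_map_le hle
  -- P lies over 𝔭
  have hPcK : Ideal.comap (algebraMap (𝓞 K) (𝓞 L)) P = 𝔭 := by
    rw [IsScalarTower.algebraMap_eq (𝓞 K) (𝓞 F) (𝓞 L), ← Ideal.comap_comap, hPc, h𝔮c]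
  haveI : 𝔮.LiesOver 𝔭 := ⟨h𝔮c.symm⟩
  haveI : P.LiesOver 𝔮 := ⟨hPc.symm⟩
  have htower_e : Ideal.ramificationIdx' 𝔭 P =
      Ideal.ramificationIdx' 𝔭 𝔮 *
        Ideal.ramificationIdx' 𝔮 P :=
    Ideal.ramificationIdx'_algebra_tower hmapQ hmapP hle
  have htower_f : Ideal.inertiaDeg' 𝔭 P =
      Ideal.inertiaDeg' 𝔭 𝔮 *
        Ideal.inertiaDeg' 𝔮 P :=
    Ideal.inertiaDeg'_algebra_tower 𝔭 𝔮 P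
  have hdvd := hL P hPne hPprime hPcK
  rw [htower_e, htower_f] at hdvd
  have hcop : ¬ p ∣ Ideal.ramificationIdx' 𝔭 𝔮 *
      Ideal.inertiaDeg' 𝔭 𝔮 := hF 𝔮 h𝔮ne h𝔮p h𝔮c
  have : (Ideal.ramificationIdx' 𝔭 𝔮 *
        Ideal.ramificationIdx' 𝔮 P) *
      (Ideal.inertiaDeg' 𝔭 𝔮 *
        Ideal.inertiaDeg' 𝔮 P) =
      (Ideal.ramificationIdx' 𝔭 𝔮 *
        Ideal.inertiaDeg' 𝔭 𝔮) *
      (Ideal.ramificationIdx' 𝔮 P *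
        Ideal.inertiaDeg' 𝔮 P) := by ring
  rw [this] at hdvd
  exact (Nat.Coprime.pow_left t ((Nat.Prime.coprime_iff_not_dvd hp).mpr hcop)).dvd_of_dvd_mul_left hdvd
end

section
/- Let K ⊆ F ⊆ L be a tower of number fields, let p be a prime number, let t be a positive integer, and let 𝔭 be a nonzero prime ideal of the ring of integers O_K of K. Assume: (i) for every nonzero prime ideal 𝔓 of O_L lying over 𝔭, p^t divides e(𝔓/𝔭)·f(𝔓/𝔭); (ii) for every nonzero prime ideal 𝔮 of O_F lying over 𝔭, p does not divide e(𝔮/𝔭)·f(𝔮/𝔭); and (iii) p^{t+1} does not divide [L:K]. Then p does not divide the field degree [F:K]. -/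
open NumberField Ideal

/-- Let `K ⊆ F ⊆ L` be a tower of number fields, `p` a prime, `t > 0`,
and `𝔭` a nonzero prime ideal of `𝓞 K`.  If `p ^ t` divides `e · f` for every nonzero prime
of `𝓞 L` over `𝔭`, `p` does not divide `e · f` for any nonzero prime of `𝓞 F` over `𝔭`,
and `p ^ (t + 1)` does not divide `[L : K]`, then `p` does not divide `[F : K]`. -/
theorem selectivity_stmt1
    (K F L : Type) [Field K] [Field F] [Field L]
    [NumberField K] [NumberField F] [NumberField L]
    [Algebra K F] [Algebra F L] [Algebra K L] [IsScalarTower K F L]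
    (p t : ℕ) (hp : p.Prime) (ht : 0 < t)
    (𝔭 : Ideal (𝓞 K)) (h𝔭ne : 𝔭 ≠ ⊥) (h𝔭 : 𝔭.IsPrime)
    (hL : ∀ P : Ideal (𝓞 L), P ≠ ⊥ → P.IsPrime →
        Ideal.comap (algebraMap (𝓞 K) (𝓞 L)) P = 𝔭 →
        p ^ t ∣ Ideal.ramificationIdx' 𝔭 P *
          Ideal.inertiaDeg' 𝔭 P)
    (hF : ∀ 𝔮 : Ideal (𝓞 F), 𝔮 ≠ ⊥ → 𝔮.IsPrime →
        Ideal.comap (algebraMap (𝓞 K) (𝓞 F)) 𝔮 = 𝔭 →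
        ¬ p ∣ Ideal.ramificationIdx' 𝔭 𝔮 *
          Ideal.inertiaDeg' 𝔭 𝔮)
    (hLK : ¬ p ^ (t + 1) ∣ Module.finrank K L) :
    ¬ p ∣ Module.finrank K F := by
  classical
  haveI := h𝔭
  -- injectivity of the maps between rings of integers
  have hinjF : Function.Injective (algebraMap (𝓞 K) (𝓞 F)) := by
    have h1 : Function.Injective (algebraMap (𝓞 K) F) := by
      rw [IsScalarTower.algebraMap_eq (𝓞 K) K F]
      exact (algebraMap K F).injective.comp RingOfIntegers.coe_injective
    rw [IsScalarTower.algebraMap_eq (𝓞 K) (𝓞 F) F, RingHom.coe_comp] at h1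
    exact Function.Injective.of_comp h1
  have hinjFL : Function.Injective (algebraMap (𝓞 F) (𝓞 L)) := by
    have h1 : Function.Injective (algebraMap (𝓞 F) L) := by
      rw [IsScalarTower.algebraMap_eq (𝓞 F) F L]
      exact (algebraMap F L).injective.comp RingOfIntegers.coe_injective
    rw [IsScalarTower.algebraMap_eq (𝓞 F) (𝓞 L) L, RingHom.coe_comp] at h1
    exact Function.Injective.of_comp h1
  have hinjKL : Function.Injective (algebraMap (𝓞 K) (𝓞 L)) := by
    rw [IsScalarTower.algebraMap_eq (𝓞 K) (𝓞 F) (𝓞 L), RingHom.coe_comp]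
    exact hinjFL.comp hinjF
  haveI : 𝔭.IsMaximal := Ideal.IsPrime.isMaximal h𝔭 h𝔭ne
  -- find a prime 𝔮 of 𝓞 F over 𝔭
  obtain ⟨𝔮, -, h𝔮pr, h𝔮c⟩ :=
    Ideal.exists_ideal_over_prime_of_isIntegral (S := 𝓞 F) 𝔭 ⊥
      (by rw [Ideal.comap_bot_of_injective _ hinjF]; exact bot_le)
  haveI := h𝔮pr
  have h𝔮ne : 𝔮 ≠ ⊥ := by
    rintro rfl
    rw [← h𝔮c, Ideal.comap_bot_of_injective _ hinjF] at h𝔭ne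
    exact h𝔭ne rfl
  haveI : 𝔮.IsMaximal := Ideal.IsPrime.isMaximal h𝔮pr h𝔮ne
  haveI : 𝔮.LiesOver 𝔭 := ⟨h𝔮c.symm⟩
  -- the fundamental identity for 𝔮 in L/F
  have hsum := Ideal.sum_ramification_inertia (S := 𝓞 L) (p := 𝔮) F L h𝔮ne
  -- p ^ t divides [L : F]
  have hpt : p ^ t ∣ Module.finrank F L := by
    rw [← hsum]
    refine Finset.dvd_sum fun P hP => ?_
    rw [Multiset.mem_toFinset] at hP
    have hPpr : Prime P := UniqueFactorizationMonoid.prime_of_factor P hP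
    haveI hPisP : P.IsPrime := Ideal.isPrime_of_prime hPpr
    have hPne : P ≠ ⊥ := hPpr.ne_zero
    have hmaple : Ideal.map (algebraMap (𝓞 F) (𝓞 L)) 𝔮 ≤ P :=
      Ideal.le_of_dvd (UniqueFactorizationMonoid.dvd_of_mem_factors hP)
    have hPc : Ideal.comap (algebraMap (𝓞 F) (𝓞 L)) P = 𝔮 := by
      have hle : 𝔮 ≤ Ideal.comap (algebraMap (𝓞 F) (𝓞 L)) P :=
        Ideal.map_le_iff_le_comap.mp hmaple
      exact (IsMaximal.eq_of_le ‹𝔮.IsMaximal› (Ideal.comap_ne_top _ hPisP.ne_top) hle).symm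
    haveI : P.IsMaximal := Ideal.IsPrime.isMaximal hPisP hPne
    haveI : P.LiesOver 𝔮 := ⟨hPc.symm⟩
    have hPcK : Ideal.comap (algebraMap (𝓞 K) (𝓞 L)) P = 𝔭 := by
      rw [IsScalarTower.algebraMap_eq (𝓞 K) (𝓞 F) (𝓞 L), ← Ideal.comap_comap, hPc, h𝔮c]
    have hdL := hL P hPne hPisP hPcK
    have hmap𝔮ne : Ideal.map (algebraMap (𝓞 F) (𝓞 L)) 𝔮 ≠ ⊥ := by
      rwa [Ne, Ideal.map_eq_bot_iff_of_injective hinjFL]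
    have hmap𝔭ne : Ideal.map (algebraMap (𝓞 K) (𝓞 L)) 𝔭 ≠ ⊥ := by
      rwa [Ne, Ideal.map_eq_bot_iff_of_injective hinjKL]
    have he := Ideal.ramificationIdx_algebra_tower (p := 𝔭) (P := 𝔮) (Q := P)
      hmap𝔮ne hmap𝔭ne hmaple
    have hf := Ideal.inertiaDeg_algebra_tower 𝔭 𝔮 P
    rw [he, hf, mul_mul_mul_comm] at hdL
    have hco : Nat.Coprime (p ^ t)
        (Ideal.ramificationIdx' 𝔭 𝔮 *
          Ideal.inertiaDeg' 𝔭 𝔮) :=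
      Nat.Coprime.pow_left _ (hp.coprime_iff_not_dvd.mpr (hF 𝔮 h𝔮ne h𝔮pr h𝔮c))
    exact hco.dvd_of_dvd_mul_left hdL
  -- conclude
  intro hdvd
  apply hLK
  have h2 : p ^ (t + 1) ∣ Module.finrank K F * Module.finrank F L := by
    rw [pow_succ']
    exact mul_dvd_mul hdvd hpt
  rwa [Module.finrank_mul_finrank K F L] at h2
end

section
/- Let K ⊆ F ⊆ L be a tower of number fields with F/K a Galois extension, let p be a prime number, let t be a positive integer, and let 𝔭 be a nonzero prime ideal of the ring of integers O_K of K. Assume: (i) for every nonzero prime ideal 𝔓 of O_L lying over 𝔭, p^t divides e(𝔓/𝔭)·f(𝔓/𝔭); and (ii) there exists at least one nonzero prime ideal 𝔮₀ of O_F lying over 𝔭 such that p does not divide e(𝔮₀/𝔭)·f(𝔮₀/𝔭). Then p^t divides the field degree [L:F]. -/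
open NumberField Ideal

/-- Let `K ⊆ F ⊆ L` be a tower of number fields with `F/K` Galois, `p` a
prime, `t > 0`, and `𝔭` a nonzero prime ideal of `𝓞 K`.  If `p ^ t` divides `e · f` for every
nonzero prime of `𝓞 L` over `𝔭`, and there is at least one nonzero prime `𝔮₀` of `𝓞 F` over
`𝔭` with `p ∤ e(𝔮₀/𝔭) · f(𝔮₀/𝔭)`, then `p ^ t` divides `[L : F]`. -/
theorem selectivity_stmt2
    (K F L : Type) [Field K] [Field F] [Field L]
    [NumberField K] [NumberField F] [NumberField L]
    [Algebra K F] [Algebra F L] [Algebra K L] [IsScalarTower K F L]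
    [IsGalois K F]
    (p t : ℕ) (hp : p.Prime) (ht : 0 < t)
    (𝔭 : Ideal (𝓞 K)) (h𝔭ne : 𝔭 ≠ ⊥) (h𝔭 : 𝔭.IsPrime)
    (hL : ∀ P : Ideal (𝓞 L), P ≠ ⊥ → P.IsPrime →
        Ideal.comap (algebraMap (𝓞 K) (𝓞 L)) P = 𝔭 →
        p ^ t ∣ Ideal.ramificationIdx' 𝔭 P *
          Ideal.inertiaDeg' 𝔭 P)
    (hF : ∃ 𝔮₀ : Ideal (𝓞 F), 𝔮₀ ≠ ⊥ ∧ 𝔮₀.IsPrime ∧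
        Ideal.comap (algebraMap (𝓞 K) (𝓞 F)) 𝔮₀ = 𝔭 ∧
        ¬ p ∣ Ideal.ramificationIdx' 𝔭 𝔮₀ *
          Ideal.inertiaDeg' 𝔭 𝔮₀) :
    p ^ t ∣ Module.finrank F L := by
  classical
  obtain ⟨𝔮, h𝔮ne, h𝔮prime, h𝔮comap, h𝔮nd⟩ := hF
  haveI := h𝔮prime
  haveI : 𝔮.IsMaximal := Ideal.IsPrime.isMaximal h𝔮prime h𝔮ne
  haveI : 𝔭.IsMaximal := Ideal.IsPrime.isMaximal h𝔭 h𝔭ne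
  rw [← Ideal.sum_ramification_inertia (S := 𝓞 L) (p := 𝔮) F L h𝔮ne]
  apply Finset.dvd_sum
  intro P hP
  set P' : (UniqueFactorizationMonoid.factors (map (algebraMap (𝓞 F) (𝓞 L)) 𝔮)).toFinset := ⟨P, hP⟩
  have hPne : P ≠ ⊥ := Ideal.Factors.ne_bot 𝔮 P'
  haveI hPprime : P.IsPrime := Ideal.Factors.isPrime 𝔮 P'
  haveI hPover𝔮 : P.LiesOver 𝔮 := Ideal.Factors.liesOver 𝔮 P'
  haveI h𝔮over𝔭 : 𝔮.LiesOver 𝔭 := ⟨h𝔮comap.symm⟩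
  have hinj : Function.Injective (algebraMap (𝓞 F) (𝓞 L)) :=
    RingOfIntegers.algebraMap.injective F L
  have hinjK : Function.Injective (algebraMap (𝓞 K) (𝓞 L)) :=
    RingOfIntegers.algebraMap.injective K L
  have hPcomapF : Ideal.comap (algebraMap (𝓞 F) (𝓞 L)) P = 𝔮 := (hPover𝔮.over).symm
  have hPcomapK : Ideal.comap (algebraMap (𝓞 K) (𝓞 L)) P = 𝔭 := by
    rw [IsScalarTower.algebraMap_eq (𝓞 K) (𝓞 F) (𝓞 L), ← Ideal.comap_comap,
      hPcomapF, h𝔮comap]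
  have hdvd := hL P hPne hPprime hPcomapK
  -- rewrite e and f over the tower
  have hg0 : map (algebraMap (𝓞 F) (𝓞 L)) 𝔮 ≠ ⊥ := by
    rwa [Ne, Ideal.map_eq_bot_iff_of_injective hinj]
  have hfg : map (algebraMap (𝓞 K) (𝓞 L)) 𝔭 ≠ ⊥ := by
    rwa [Ne, Ideal.map_eq_bot_iff_of_injective hinjK]
  have hle : map (algebraMap (𝓞 F) (𝓞 L)) 𝔮 ≤ P :=
    Ideal.le_of_dvd (UniqueFactorizationMonoid.dvd_of_mem_factors (Multiset.mem_toFinset.mp hP))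
  rw [Ideal.ramificationIdx'_algebra_tower hg0 hfg hle,
    Ideal.inertiaDeg'_algebra_tower 𝔭 𝔮 P] at hdvd
  have hcop : Nat.Coprime (p ^ t)
      (Ideal.ramificationIdx' 𝔭 𝔮 *
        Ideal.inertiaDeg' 𝔭 𝔮) :=
    Nat.Coprime.pow_left t ((Nat.Prime.coprime_iff_not_dvd hp).mpr h𝔮nd)
  have : Ideal.ramificationIdx' 𝔭 𝔮 *
        Ideal.ramificationIdx' 𝔮 P *
      (Ideal.inertiaDeg' 𝔭 𝔮 *
        Ideal.inertiaDeg' 𝔮 P) =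
      Ideal.ramificationIdx' 𝔭 𝔮 *
        Ideal.inertiaDeg' 𝔭 𝔮 *
      (Ideal.ramificationIdx' 𝔮 P *
        Ideal.inertiaDeg' 𝔮 P) := by ring
  rw [this, mul_comm] at hdvd
  exact hcop.dvd_of_dvd_mul_right hdvd
end
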